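/- Let p be an odd prime, let ψ : (ℚ_p,+) → ℂ^× be an additive character with conductor pℤ_p, and let μ be an additive Haar measure on ℚ_p. Fix a natural number m, and let Y be a 2×2 matrix over ℚ_p with trace(Y) = 0, det(Y) ≠ 0, and v(det Y) ≤ m. For (a,b,c) ∈ ℚ_p³ write X(a,b,c) for the trace-zero matrix [[a, b], [c, −a]], and for an integer ℓ ≥ 0 let S_ℓ = {(a,b,c) ∈ ℚ_p³ : a, b, c ∈ p^{-ℓ}ℤ_p and v(a² + b·c) ≥ −m}. Then the integrals over S_ℓ of ψ(trace(X(a,b,c)·Y)) with respect to the product measure μ³ tend to 0 as ℓ → ∞ (in fact they are eventually 0). This is the concrete form of the statement that the Fourier transform of the characteristic function of {X ∈ sl(2,ℚ_p) : v(det X) ≥ −m} is supported in {Y ∈ sl(2,ℚ_p) : v(det Y) ≥ m+1}, i.e., that FT(1_{𝔤_0}) and FT(1_{𝔤_{−1/2}}) are supported in 𝔤_{1/2} and 𝔤_1 respectively, and FT(1_{𝔤_{−k}}) is supported in 𝔤_{k+1/2} for integers k ≥ 1. -/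

import Mathlib

open MeasureTheory

section AuxiliaryLemmas

variable {p : ℕ} [Fact p.Prime]

instance aux_padicSecondCountable : SecondCountableTopology ℚ_[p] := by
  have : TopologicalSpace.SeparableSpace ℚ_[p] := by
    refine ⟨⟨Set.range ((↑) : ℚ → ℚ_[p]), Set.countable_range _, ?_⟩⟩
    intro x
    rw [mem_closure_iff_nhds_basis Metric.nhds_basis_ball]
    intro ε hε
    obtain ⟨r, hr⟩ := Padic.rat_dense (p := p) x hε
    refine ⟨r, Set.mem_range_self _, ?_⟩
    rw [Metric.mem_ball, dist_eq_norm, ← norm_neg]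
    simpa using hr
  exact UniformSpace.secondCountable_of_separable _

lemma aux_norm_add3_le (a b c : ℚ_[p]) (r : ℝ) (ha : ‖a‖ ≤ r) (hb : ‖b‖ ≤ r) (hc : ‖c‖ ≤ r) :
    ‖a + b + c‖ ≤ r :=
  le_trans (Padic.nonarchimedean _ _)
    (max_le (le_trans (Padic.nonarchimedean _ _) (max_le ha hb)) hc)

lemma aux_norm_one_add (z : ℚ_[p]) (h : ‖z‖ < 1) : ‖1 + z‖ = 1 := by
  rw [Padic.add_eq_max_of_ne (by rw [norm_one]; exact h.ne'), norm_one]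
  exact max_eq_left h.le

lemma aux_two_norm_one (hp : Odd p) : ‖(2 : ℚ_[p])‖ = 1 := by
  have h1 : ‖((2:ℤ) : ℚ_[p])‖ ≤ 1 := Padic.norm_int_le_one 2
  have h2 : ¬ ((p:ℤ) ∣ 2) := by
    intro h
    have h' : p ∣ 2 := by exact_mod_cast h
    have hp2 := (Nat.prime_dvd_prime_iff_eq Fact.out Nat.prime_two).1 h'
    rw [hp2] at hp
    exact (by norm_num : ¬ Odd 2) hp
  rw [← Padic.norm_intCast_lt_one_iff] at h2
  push_cast at h1 h2
  exact le_antisymm h1 (not_lt.1 h2)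

lemma aux_psi_continuous (ψ : AddChar ℚ_[p] ℂ)
    (hψ_triv : ∀ x : ℚ_[p], ‖x‖ ≤ (p : ℝ)⁻¹ → ψ x = 1) : Continuous ψ := by
  rw [continuous_iff_continuousAt]
  intro x
  have hpinv : (0 : ℝ) < (p : ℝ)⁻¹ := by
    have : (0:ℝ) < p := by exact_mod_cast (Fact.out : p.Prime).pos
    positivity
  apply continuousAt_const.congr (f := fun _ => ψ x)
  filter_upwards [Metric.closedBall_mem_nhds x hpinv] with y hy
  have : ψ y = ψ x * ψ (y - x) := by rw [← ψ.map_add_eq_mul]; ring_nf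
  rw [this, hψ_triv (y - x) (by rwa [Metric.mem_closedBall, dist_eq_norm] at hy), mul_one]

lemma aux_psi_ne_one (ψ : AddChar ℚ_[p] ℂ)
    (hψ_triv : ∀ x : ℚ_[p], ‖x‖ ≤ (p : ℝ)⁻¹ → ψ x = 1)
    (hψ_nontriv : ∃ x : ℚ_[p], ‖x‖ ≤ 1 ∧ ψ x ≠ 1)
    (w : ℚ_[p]) (hw : ‖w‖ = 1) : ψ w ≠ 1 := by
  intro h1
  obtain ⟨x₀, hx₀, hx₀'⟩ := hψ_nontriv
  apply hx₀'
  have hw0 : w ≠ 0 := by intro h; simp [h] at hw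
  have hle : ‖x₀ * w⁻¹‖ ≤ 1 := by
    rw [norm_mul, norm_inv, hw]; simpa using hx₀
  set z : ℤ_[p] := ⟨x₀ * w⁻¹, hle⟩ with hz
  have hpinv : (0 : ℝ) < (p : ℝ)⁻¹ := by
    have : (0:ℝ) < p := by exact_mod_cast (Fact.out : p.Prime).pos
    positivity
  obtain ⟨k, hk⟩ := PadicInt.denseRange_natCast.exists_dist_lt z hpinv
  have hknorm : ‖x₀ * w⁻¹ - (k : ℚ_[p])‖ < (p : ℝ)⁻¹ := by
    rw [dist_eq_norm] at hk
    have h2 : x₀ * w⁻¹ - (k : ℚ_[p]) = ((z - (k:ℤ_[p]) : ℤ_[p]) : ℚ_[p]) := by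
      push_cast [hz]
      rfl
    rw [h2, PadicInt.padic_norm_e_of_padicInt]
    exact hk
  have hdecomp : x₀ = (k : ℚ_[p]) * w + (x₀ - (k:ℚ_[p]) * w) := by ring
  have hsmall : ‖x₀ - (k:ℚ_[p]) * w‖ ≤ (p:ℝ)⁻¹ := by
    have : x₀ - (k:ℚ_[p]) * w = w * (x₀ * w⁻¹ - (k:ℚ_[p])) := by field_simp
    rw [this, norm_mul, hw, one_mul]
    exact hknorm.le
  rw [hdecomp, ψ.map_add_eq_mul, hψ_triv _ hsmall, mul_one, ← nsmul_eq_mul,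
    AddChar.map_nsmul_eq_pow, h1, one_pow]

lemma aux_psi_norm_one (ψ : AddChar ℚ_[p] ℂ)
    (hψ_triv : ∀ x : ℚ_[p], ‖x‖ ≤ (p : ℝ)⁻¹ → ψ x = 1) (z : ℚ_[p]) : ‖ψ z‖ = 1 := by
  have hp1 : (1:ℝ) < p := by exact_mod_cast (Fact.out : p.Prime).one_lt
  obtain ⟨k, hk⟩ : ∃ k : ℕ, ‖z‖ ≤ (p:ℝ) ^ k := by
    obtain ⟨k, hk⟩ := pow_unbounded_of_one_lt ‖z‖ hp1
    exact ⟨k, hk.le⟩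
  have hsmall : ‖(p:ℚ_[p]) ^ (k+1) * z‖ ≤ (p:ℝ)⁻¹ := by
    rw [norm_mul, norm_pow, Padic.norm_p]
    calc ((p:ℝ)⁻¹) ^ (k+1) * ‖z‖ ≤ ((p:ℝ)⁻¹)^(k+1) * (p:ℝ)^k := by
          gcongr
      _ = (p:ℝ)⁻¹ := by
          rw [pow_succ]
          field_simp
          rw [← mul_pow, one_div, inv_mul_cancel₀ (ne_of_gt (by linarith)), one_pow]
  have hpow : ψ z ^ (p ^ (k+1)) = 1 := by
    rw [← AddChar.map_nsmul_eq_pow, nsmul_eq_mul]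
    apply hψ_triv
    push_cast
    exact hsmall
  have := congrArg (‖·‖) hpow
  simp only [norm_pow, norm_one] at this
  have hne : p ^ (k+1) ≠ 0 := pow_ne_zero _ (Fact.out : p.Prime).pos.ne'
  by_contra hne1
  rcases lt_or_gt_of_ne hne1 with h | h
  · have h2 := pow_lt_one₀ (norm_nonneg (ψ z)) h hne
    rw [this] at h2
    exact lt_irrefl _ h2
  · have h2 := one_lt_pow₀ h hne
    rw [this] at h2
    exact lt_irrefl _ h2

lemma aux_sum_psi_zero (ψ : AddChar ℚ_[p] ℂ)
    (hψ_triv : ∀ x : ℚ_[p], ‖x‖ ≤ (p : ℝ)⁻¹ → ψ x = 1)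
    (hψ_nontriv : ∃ x : ℚ_[p], ‖x‖ ≤ 1 ∧ ψ x ≠ 1)
    (t₀ z₀ : ℚ_[p]) (hz : ‖z₀‖ = 1) :
    ∑ j ∈ Finset.range p, ψ (t₀ + (j : ℚ_[p]) * z₀) = 0 := by
  have hζ : ψ z₀ ≠ 1 := aux_psi_ne_one ψ hψ_triv hψ_nontriv z₀ hz
  have hterm : ∀ j : ℕ, ψ (t₀ + (j : ℚ_[p]) * z₀) = ψ t₀ * ψ z₀ ^ j := by
    intro j
    rw [ψ.map_add_eq_mul, ← nsmul_eq_mul, AddChar.map_nsmul_eq_pow]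
  simp_rw [hterm]
  rw [← Finset.mul_sum]
  have hgeom : ∑ j ∈ Finset.range p, ψ z₀ ^ j = 0 := by
    rw [geom_sum_eq hζ]
    have hp : ψ z₀ ^ p = 1 := by
      rw [← AddChar.map_nsmul_eq_pow, nsmul_eq_mul]
      apply hψ_triv
      rw [norm_mul, hz, mul_one]
      have : ((p:ℕ) : ℚ_[p]) = (p : ℚ_[p]) := by push_cast; ring
      rw [this, Padic.norm_p]
    rw [hp, sub_self, zero_div]
  rw [hgeom, mul_zero]

lemma aux_kill {E : Type*} [MeasurableSpace E] (ν : Measure E) (P : Set E)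
    (hP : MeasurableSet P)
    (f : E → ℂ) (hf : IntegrableOn f P ν) (n : ℕ) (hn : 0 < n)
    (T : ℕ → E → E) (hT : ∀ j < n, MeasurePreserving (T j) ν ν)
    (hemb : ∀ j < n, MeasurableEmbedding (T j))
    (hTP : ∀ j < n, T j ⁻¹' P = P)
    (hsum : ∀ x ∈ P, ∑ j ∈ Finset.range n, f (T j x) = 0) :
    ∫ x in P, f x ∂ν = 0 := by
  have key : ∀ j < n, ∫ x in P, f (T j x) ∂ν = ∫ x in P, f x ∂ν := by
    intro j hj
    conv_lhs => rw [← hTP j hj]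
    exact (hT j hj).setIntegral_preimage_emb (hemb j hj) f P
  have hint : ∀ j < n, IntegrableOn (fun x => f (T j x)) P ν := by
    intro j hj
    have h1 : MeasurePreserving (T j) (ν.restrict P) (ν.restrict P) := by
      have := (hT j hj).restrict_preimage_emb (hemb j hj) P
      rwa [hTP j hj] at this
    exact (h1.integrable_comp_emb (hemb j hj)).2 hf
  have hz : (n : ℂ) • ∫ x in P, f x ∂ν = 0 := by
    have h1 : ∑ j ∈ Finset.range n, ∫ x in P, f (T j x) ∂ν = 0 := by
      rw [← integral_finset_sum _ (fun j hj => hint j (Finset.mem_range.1 hj))]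
      rw [setIntegral_congr_fun hP (fun x hx => hsum x hx), integral_zero]
    calc (n : ℂ) • ∫ x in P, f x ∂ν
        = ∑ _j ∈ Finset.range n, ∫ x in P, f x ∂ν := by
          simp [Finset.sum_const, Nat.cast_smul_eq_nsmul]
      _ = ∑ j ∈ Finset.range n, ∫ x in P, f (T j x) ∂ν :=
          (Finset.sum_congr rfl fun j hj => (key j (Finset.mem_range.1 hj)).symm)
      _ = 0 := h1
  have hne : (n : ℂ) ≠ 0 := Nat.cast_ne_zero.2 hn.ne'
  simpa [smul_eq_mul, hne] using hz

section WithMeasure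

variable [MeasurableSpace ℚ_[p]] [BorelSpace ℚ_[p]]
  (μ : Measure ℚ_[p]) [μ.IsAddHaarMeasure]

lemma aux_unit_mul_mp (u : ℚ_[p]) (hu : ‖u‖ = 1) :
    MeasurePreserving (fun x : ℚ_[p] => u * x) μ μ := by
  have hu0 : u ≠ 0 := by intro h; simp [h] at hu
  set e : ℚ_[p] ≃+ ℚ_[p] := AddAut.mulLeft (Units.mk0 u hu0) with he
  have hec : Continuous e := by
    show Continuous (fun x : ℚ_[p] => u * x); fun_prop
  have hec' : Continuous e.symm := by
    have : (e.symm : ℚ_[p] → ℚ_[p]) = fun x => u⁻¹ * x := by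
      funext x
      have h3 := e.symm_apply_apply (u⁻¹ * x)
      have h2 : e (u⁻¹ * x) = x := by
        show u * (u⁻¹ * x) = x
        field_simp
      rw [h2] at h3; exact h3.symm
    rw [this]; fun_prop
  have hmap : (μ.map e).IsAddHaarMeasure := e.isAddHaarMeasure_map μ hec hec'
  have huniq : (μ.map e) = Measure.addHaarScalarFactor (μ.map e) μ • μ :=
    Measure.isAddLeftInvariant_eq_smul _ _
  have hball : (μ.map e) (Metric.closedBall 0 1) = μ (Metric.closedBall 0 1) := by
    rw [Measure.map_apply hec.measurable measurableSet_closedBall]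
    congr 1
    ext x
    have hx : e x = u * x := rfl
    simp only [Set.mem_preimage, Metric.mem_closedBall, dist_zero_right, hx]
    rw [norm_mul, hu, one_mul]
  have h0 : μ (Metric.closedBall (0:ℚ_[p]) 1) ≠ 0 :=
    (Metric.isOpen_ball.measure_pos μ (Metric.nonempty_ball.2 one_pos)).trans_le
      (measure_mono Metric.ball_subset_closedBall) |>.ne'
  have hfin : μ (Metric.closedBall (0:ℚ_[p]) 1) ≠ ⊤ :=
    (isCompact_closedBall _ _).measure_lt_top.ne
  have hc : ((Measure.addHaarScalarFactor (μ.map e) μ : NNReal) : ENNReal) = 1 := by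
    have h5 := hball
    rw [huniq] at h5
    simp only [Measure.smul_apply, smul_eq_mul] at h5
    rw [← one_mul (μ (Metric.closedBall 0 1))] at h5
    exact (ENNReal.mul_left_inj h0 hfin).1 (by simpa using h5)
  refine ⟨hec.measurable, ?_⟩
  show μ.map e = μ
  rw [huniq]
  ext s hs
  simp [Measure.smul_apply, hc]

lemma aux_transl_mp (v : ℚ_[p] × ℚ_[p] × ℚ_[p]) :
    MeasurePreserving (fun x => x + v) (μ.prod (μ.prod μ)) (μ.prod (μ.prod μ)) := by
  have h1 : ∀ c : ℚ_[p], MeasurePreserving (fun x : ℚ_[p] => x + c) μ μ :=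
    fun c => measurePreserving_add_right μ c
  exact ((h1 v.1).prod ((h1 v.2.1).prod (h1 v.2.2)))

lemma aux_transl_emb (v : ℚ_[p] × ℚ_[p] × ℚ_[p]) :
    MeasurableEmbedding (fun x : ℚ_[p] × ℚ_[p] × ℚ_[p] => x + v) :=
  (Homeomorph.addRight v).measurableEmbedding

lemma aux_scal_mp (u : ℚ_[p]) (hu : ‖u‖ = 1) :
    MeasurePreserving (fun x : ℚ_[p] × ℚ_[p] × ℚ_[p] => (u * x.1, u * x.2.1, u * x.2.2))
      (μ.prod (μ.prod μ)) (μ.prod (μ.prod μ)) :=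
  (aux_unit_mul_mp μ u hu).prod ((aux_unit_mul_mp μ u hu).prod (aux_unit_mul_mp μ u hu))

lemma aux_scal_emb (u : ℚ_[p]) (hu : u ≠ 0) :
    MeasurableEmbedding (fun x : ℚ_[p] × ℚ_[p] × ℚ_[p] => (u * x.1, u * x.2.1, u * x.2.2)) := by
  have h : (fun x : ℚ_[p] × ℚ_[p] × ℚ_[p] => (u * x.1, u * x.2.1, u * x.2.2)) =
      (Homeomorph.smulOfNeZero u hu : (ℚ_[p] × ℚ_[p] × ℚ_[p]) ≃ₜ (ℚ_[p] × ℚ_[p] × ℚ_[p])) := by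
    funext x
    rfl
  rw [h]
  exact (Homeomorph.smulOfNeZero u hu).measurableEmbedding

end WithMeasure

end AuxiliaryLemmas

/-- For `p` an odd prime, `ψ` an additive character of `ℚ_p` with conductor `pℤ_p`,
`μ` an additive Haar measure on `ℚ_p`, `m : ℕ`, and `Y ∈ sl(2,ℚ_p)` with
`det Y ≠ 0` and `v(det Y) ≤ m`, the integrals over
`S_ℓ = {(a,b,c) : a,b,c ∈ p^{-ℓ}ℤ_p, v(a² + b·c) ≥ -m}` of
`ψ(trace(X(a,b,c)·Y))`, with `X(a,b,c) = !![a, b; c, -a]`, are eventually `0` as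
`ℓ → ∞`.  This expresses that the Fourier transform of the characteristic function
of `{X ∈ sl(2,ℚ_p) : v(det X) ≥ -m}` is supported in
`{Y ∈ sl(2,ℚ_p) : v(det Y) ≥ m + 1}`. -/
theorem fourier_transform_support
    (p : ℕ) [Fact p.Prime] (hp : Odd p)
    [MeasurableSpace ℚ_[p]] [BorelSpace ℚ_[p]]
    (ψ : AddChar ℚ_[p] ℂ)
    (hψ_triv : ∀ x : ℚ_[p], ‖x‖ ≤ (p : ℝ)⁻¹ → ψ x = 1)
    (hψ_nontriv : ∃ x : ℚ_[p], ‖x‖ ≤ 1 ∧ ψ x ≠ 1)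
    (μ : Measure ℚ_[p]) [μ.IsAddHaarMeasure]
    (m : ℕ)
    (Y : Matrix (Fin 2) (Fin 2) ℚ_[p]) (htr : Y.trace = 0) (hdet : Y.det ≠ 0)
    (hval : (Y.det).valuation ≤ (m : ℤ)) :
    ∃ L : ℕ, ∀ ℓ : ℕ, L ≤ ℓ →
      (∫ x in {x : ℚ_[p] × ℚ_[p] × ℚ_[p] |
          ‖x.1‖ ≤ (p : ℝ) ^ ℓ ∧ ‖x.2.1‖ ≤ (p : ℝ) ^ ℓ ∧ ‖x.2.2‖ ≤ (p : ℝ) ^ ℓ ∧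
            ‖x.1 ^ 2 + x.2.1 * x.2.2‖ ≤ (p : ℝ) ^ m},
        ψ ((!![x.1, x.2.1; x.2.2, -x.1] * Y).trace) ∂(μ.prod (μ.prod μ))) = 0 := by
  classical
  have hprime : p.Prime := Fact.out
  have hp1 : (1:ℝ) < p := by exact_mod_cast hprime.one_lt
  have hp0 : (0:ℝ) < p := lt_trans one_pos hp1
  -- coordinates of Y
  set α : ℚ_[p] := Y 0 0 with hα
  set β : ℚ_[p] := Y 0 1 with hβ
  set γ : ℚ_[p] := Y 1 0 with hγ
  have hδ : Y 1 1 = -α := by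
    rw [Matrix.trace_fin_two] at htr
    linear_combination htr
  have hd : Y.det = -(α^2 + β*γ) := by
    rw [Matrix.det_fin_two, hδ]; ring
  have hd0 : Y.det ≠ 0 := hdet
  -- the linear functional t and the quadratic form q
  set t : ℚ_[p] × ℚ_[p] × ℚ_[p] → ℚ_[p] := fun x => 2*x.1*α + x.2.1*γ + x.2.2*β with htdef
  set q : ℚ_[p] × ℚ_[p] × ℚ_[p] → ℚ_[p] := fun x => x.1^2 + x.2.1*x.2.2 with hqdef
  have htrace : ∀ x : ℚ_[p] × ℚ_[p] × ℚ_[p],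
      (!![x.1, x.2.1; x.2.2, -x.1] * Y).trace = t x := by
    intro x
    rw [Matrix.trace_fin_two]
    simp only [Matrix.mul_apply, Fin.sum_univ_two]
    rw [show (!![x.1, x.2.1; x.2.2, -x.1] : Matrix (Fin 2) (Fin 2) ℚ_[p]) 0 0 = x.1 from rfl,
      show (!![x.1, x.2.1; x.2.2, -x.1] : Matrix (Fin 2) (Fin 2) ℚ_[p]) 0 1 = x.2.1 from rfl,
      show (!![x.1, x.2.1; x.2.2, -x.1] : Matrix (Fin 2) (Fin 2) ℚ_[p]) 1 0 = x.2.2 from rfl,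
      show (!![x.1, x.2.1; x.2.2, -x.1] : Matrix (Fin 2) (Fin 2) ℚ_[p]) 1 1 = -x.1 from rfl,
      hδ, htdef]
    ring
  -- bounds on the entries of Y
  obtain ⟨K, hKα, hKβ, hKγ⟩ :
      ∃ K : ℕ, ‖α‖ ≤ (p:ℝ)^K ∧ ‖β‖ ≤ (p:ℝ)^K ∧ ‖γ‖ ≤ (p:ℝ)^K := by
    obtain ⟨K₁, h1⟩ := pow_unbounded_of_one_lt ‖α‖ hp1
    obtain ⟨K₂, h2⟩ := pow_unbounded_of_one_lt ‖β‖ hp1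
    obtain ⟨K₃, h3⟩ := pow_unbounded_of_one_lt ‖γ‖ hp1
    exact ⟨K₁ ⊔ K₂ ⊔ K₃,
      le_trans h1.le (pow_le_pow_right₀ hp1.le (by omega)),
      le_trans h2.le (pow_le_pow_right₀ hp1.le (by omega)),
      le_trans h3.le (pow_le_pow_right₀ hp1.le (by omega))⟩
  -- norm of det Y
  have hdpos : (0:ℝ) < ‖Y.det‖ := norm_pos_iff.2 hd0
  have hdinv : ‖Y.det‖⁻¹ ≤ (p:ℝ)^m := by
    rw [inv_le_comm₀ hdpos (by positivity)]
    have h1 : ((p:ℝ)^m)⁻¹ = (p:ℝ)^(-(m:ℤ)) := by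
      rw [← zpow_natCast (p:ℝ) m, ← zpow_neg]
    rw [h1, Padic.norm_eq_zpow_neg_valuation hd0]
    exact zpow_le_zpow_right₀ hp1.le (by omega)
  have h2norm : ‖(2:ℚ_[p])‖ = 1 := aux_two_norm_one hp
  -- the translation parameter
  set ε : ℚ_[p] := -(2 * Y.det)⁻¹ with hεdef
  have h2d0 : (2:ℚ_[p]) * Y.det ≠ 0 := mul_ne_zero two_ne_zero hd0
  have hεnorm : ‖ε‖ = ‖Y.det‖⁻¹ := by
    rw [hεdef, norm_neg, norm_inv, norm_mul, h2norm, one_mul]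
  have hεkey : ε * (2*(α^2 + β*γ)) = 1 := by
    have h1 : α^2 + β*γ = -Y.det := by linear_combination hd
    rw [h1, hεdef]
    field_simp
  set w : ℚ_[p] × ℚ_[p] × ℚ_[p] := (ε * α, ε * β, ε * γ) with hwdef
  have hshift : ∀ (x : ℚ_[p] × ℚ_[p] × ℚ_[p]) (c : ℚ_[p]), t (x + c • w) = t x + c := by
    intro x c
    show 2*(x.1 + c * (ε * α))*α + (x.2.1 + c * (ε * β))*γ + (x.2.2 + c * (ε * γ))*β
      = 2*x.1*α + x.2.1*γ + x.2.2*β + c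
    linear_combination c * hεkey
  have hqshift : ∀ (x : ℚ_[p] × ℚ_[p] × ℚ_[p]) (c : ℚ_[p]),
      q (x + c • w) = q x + (c*ε) * t x + (c*ε)^2 * (α^2 + β*γ) := by
    intro x c
    show (x.1 + c * (ε * α))^2 + (x.2.1 + c * (ε * β)) * (x.2.2 + c * (ε * γ))
      = (x.1^2 + x.2.1*x.2.2) + (c*ε) * (2*x.1*α + x.2.1*γ + x.2.2*β)
        + (c*ε)^2 * (α^2 + β*γ)
    ring
  -- choice of the threshold
  refine ⟨m + K, fun ℓ hℓ => ?_⟩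
  have hmK : (p:ℝ)^m * (p:ℝ)^K ≤ (p:ℝ)^ℓ := by
    rw [← pow_add]
    exact pow_le_pow_right₀ hp1.le hℓ
  set ν : Measure (ℚ_[p] × ℚ_[p] × ℚ_[p]) := μ.prod (μ.prod μ) with hνdef
  set S : Set (ℚ_[p] × ℚ_[p] × ℚ_[p]) := {x : ℚ_[p] × ℚ_[p] × ℚ_[p] |
      ‖x.1‖ ≤ (p : ℝ) ^ ℓ ∧ ‖x.2.1‖ ≤ (p : ℝ) ^ ℓ ∧ ‖x.2.2‖ ≤ (p : ℝ) ^ ℓ ∧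
        ‖x.1 ^ 2 + x.2.1 * x.2.2‖ ≤ (p : ℝ) ^ m} with hSdef
  set f : ℚ_[p] × ℚ_[p] × ℚ_[p] → ℂ := fun x => ψ (t x) with hfdef
  -- continuity and measurability
  have htc : Continuous t := by rw [htdef]; fun_prop
  have hqc : Continuous q := by rw [hqdef]; fun_prop
  have hfc : Continuous f := (aux_psi_continuous ψ hψ_triv).comp htc
  have hSclosed : IsClosed S := by
    rw [hSdef]
    have h1 : IsClosed {x : ℚ_[p] × ℚ_[p] × ℚ_[p] | ‖x.1‖ ≤ (p:ℝ)^ℓ} :=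
      isClosed_le (by fun_prop) continuous_const
    have h2 : IsClosed {x : ℚ_[p] × ℚ_[p] × ℚ_[p] | ‖x.2.1‖ ≤ (p:ℝ)^ℓ} :=
      isClosed_le (by fun_prop) continuous_const
    have h3 : IsClosed {x : ℚ_[p] × ℚ_[p] × ℚ_[p] | ‖x.2.2‖ ≤ (p:ℝ)^ℓ} :=
      isClosed_le (by fun_prop) continuous_const
    have h4 : IsClosed {x : ℚ_[p] × ℚ_[p] × ℚ_[p] | ‖x.1 ^ 2 + x.2.1 * x.2.2‖ ≤ (p:ℝ)^m} :=
      isClosed_le (by fun_prop) continuous_const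
    exact h1.inter (h2.inter (h3.inter h4))
  have hSmeas : MeasurableSet S := hSclosed.measurableSet
  -- pieces of the partition
  set B : Set (ℚ_[p] × ℚ_[p] × ℚ_[p]) := S ∩ {x | ‖t x‖ ≤ 1} with hBdef
  set C : ℕ → Set (ℚ_[p] × ℚ_[p] × ℚ_[p]) :=
    fun n => S ∩ {x | ‖t x‖ = (p:ℝ)^(n+1)} with hCdef
  have hBmeas : MeasurableSet B :=
    hSmeas.inter (isClosed_le (by fun_prop) continuous_const).measurableSet
  have hCmeas : ∀ n, MeasurableSet (C n) := fun n =>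
    hSmeas.inter (isClosed_eq (by fun_prop) continuous_const).measurableSet
  -- integrability
  have hνS : ν S ≠ ⊤ := by
    have hsub : S ⊆ (Metric.closedBall (0:ℚ_[p]) ((p:ℝ)^ℓ)) ×ˢ
        ((Metric.closedBall (0:ℚ_[p]) ((p:ℝ)^ℓ)) ×ˢ (Metric.closedBall (0:ℚ_[p]) ((p:ℝ)^ℓ))) := by
      rintro x ⟨h1, h2, h3, _⟩
      refine ⟨?_, ?_, ?_⟩ <;> rw [Metric.mem_closedBall, dist_zero_right] <;> assumption
    have hfin : μ (Metric.closedBall (0:ℚ_[p]) ((p:ℝ)^ℓ)) < ⊤ :=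
      (isCompact_closedBall _ _).measure_lt_top
    refine ne_of_lt (lt_of_le_of_lt (measure_mono hsub) ?_)
    rw [hνdef, Measure.prod_prod, Measure.prod_prod]
    exact ENNReal.mul_lt_top hfin (ENNReal.mul_lt_top hfin hfin)
  have hfS : IntegrableOn f S ν := by
    apply Measure.integrableOn_of_bounded hνS hfc.aestronglyMeasurable
    exact ae_of_all _ fun x => (aux_psi_norm_one ψ hψ_triv (t x)).le
  -- upper bound for t on S
  have htup : ∀ x ∈ S, ‖t x‖ ≤ (p:ℝ)^(ℓ+K) := by
    rintro x ⟨h1, h2, h3, _⟩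
    show ‖2*x.1*α + x.2.1*γ + x.2.2*β‖ ≤ (p:ℝ)^(ℓ+K)
    rw [pow_add]
    apply aux_norm_add3_le
    · rw [mul_assoc, norm_mul, norm_mul, h2norm, one_mul]
      exact mul_le_mul h1 hKα (norm_nonneg _) (by positivity)
    · rw [norm_mul]
      exact mul_le_mul h2 hKγ (norm_nonneg _) (by positivity)
    · rw [norm_mul]
      exact mul_le_mul h3 hKβ (norm_nonneg _) (by positivity)
  -- the partition
  have hcover : S = B ∪ ⋃ n ∈ Finset.range (ℓ+K), C n := by
    apply Set.Subset.antisymm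
    · intro x hx
      by_cases h1 : ‖t x‖ ≤ 1
      · exact Or.inl ⟨hx, h1⟩
      · right
        push_neg at h1
        have ht0 : t x ≠ 0 := by
          intro h
          rw [h, norm_zero] at h1
          linarith
        have hvx := Padic.norm_eq_zpow_neg_valuation ht0
        have hneg : 0 < -(t x).valuation := by
          by_contra hc
          push_neg at hc
          have : (p:ℝ) ^ (-(t x).valuation) ≤ (p:ℝ)^(0:ℤ) :=
            zpow_le_zpow_right₀ hp1.le hc
          rw [zpow_zero] at this
          rw [hvx] at h1
          linarith
        have hle : -(t x).valuation ≤ (ℓ+K : ℤ) := by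
          have hb := htup x hx
          rw [hvx] at hb
          have : (p:ℝ) ^ (-(t x).valuation) ≤ (p:ℝ)^((ℓ+K : ℕ) : ℤ) := by
            rwa [zpow_natCast]
          exact le_of_not_gt fun hcon => absurd this
            (not_le.2 (zpow_lt_zpow_right₀ hp1 hcon))
        set n : ℕ := (-(t x).valuation).toNat - 1 with hndef
        have hn1 : ((n+1 : ℕ) : ℤ) = -(t x).valuation := by omega
        refine Set.mem_biUnion (show n ∈ Finset.range (ℓ+K) from Finset.mem_range.2 (by omega))
          ⟨hx, ?_⟩
        show ‖t x‖ = (p:ℝ)^(n+1)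
        rw [hvx, ← hn1, zpow_natCast]
    · apply Set.union_subset Set.inter_subset_left
      exact Set.iUnion₂_subset fun n _ => Set.inter_subset_left
  -- preservation of B by translations
  have hBpres : ∀ c : ℚ_[p], ‖c‖ ≤ 1 → ∀ x, x ∈ B → x + c • w ∈ B := by
    rintro c hc x ⟨⟨h1, h2, h3, h4⟩, h5⟩
    have h5' : ‖t x‖ ≤ 1 := h5
    have hsmall : ∀ z : ℚ_[p], ‖z‖ ≤ (p:ℝ)^K → ‖c * (ε * z)‖ ≤ (p:ℝ)^ℓ := by
      intro z hz
      rw [norm_mul, norm_mul]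
      calc ‖c‖ * (‖ε‖ * ‖z‖) ≤ 1 * ((p:ℝ)^m * (p:ℝ)^K) := by
            apply mul_le_mul hc _ (by positivity) one_pos.le
            exact mul_le_mul (hεnorm ▸ hdinv) hz (norm_nonneg _) (by positivity)
        _ ≤ (p:ℝ)^ℓ := by rw [one_mul]; exact hmK
    refine ⟨⟨?_, ?_, ?_, ?_⟩, ?_⟩
    · show ‖x.1 + c * (ε * α)‖ ≤ (p:ℝ)^ℓ
      exact le_trans (Padic.nonarchimedean _ _) (max_le h1 (hsmall α hKα))
    · show ‖x.2.1 + c * (ε * β)‖ ≤ (p:ℝ)^ℓ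
      exact le_trans (Padic.nonarchimedean _ _) (max_le h2 (hsmall β hKβ))
    · show ‖x.2.2 + c * (ε * γ)‖ ≤ (p:ℝ)^ℓ
      exact le_trans (Padic.nonarchimedean _ _) (max_le h3 (hsmall γ hKγ))
    · show ‖q (x + c • w)‖ ≤ (p:ℝ)^m
      rw [hqshift x c]
      apply aux_norm_add3_le
      · exact h4
      · rw [norm_mul, norm_mul]
        calc ‖c‖ * ‖ε‖ * ‖t x‖ ≤ 1 * (p:ℝ)^m * 1 := by
              apply mul_le_mul _ h5' (norm_nonneg _) (by positivity)
              exact mul_le_mul hc (hεnorm ▸ hdinv) (norm_nonneg _) one_pos.le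
          _ = (p:ℝ)^m := by ring
      · have hαβγ : ‖α^2 + β*γ‖ = ‖Y.det‖ := by
          rw [hd, norm_neg]
        rw [norm_mul, norm_pow, norm_mul, hαβγ]
        calc (‖c‖ * ‖ε‖)^2 * ‖Y.det‖ ≤ (1 * ‖Y.det‖⁻¹)^2 * ‖Y.det‖ := by
              apply mul_le_mul _ le_rfl hdpos.le (by positivity)
              apply pow_le_pow_left₀ (by positivity)
              exact mul_le_mul hc (le_of_eq hεnorm) (norm_nonneg _) one_pos.le
          _ = ‖Y.det‖⁻¹ := by
              rw [one_mul]
              field_simp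
          _ ≤ (p:ℝ)^m := hdinv
    · show ‖t (x + c • w)‖ ≤ 1
      rw [hshift x c]
      exact le_trans (Padic.nonarchimedean _ _) (max_le h5' hc)
  -- the integral over B vanishes
  have hB0 : ∫ x in B, f x ∂ν = 0 := by
    apply aux_kill ν B hBmeas f (hfS.mono_set Set.inter_subset_left) p hprime.pos
      (fun j x => x + (j:ℚ_[p]) • w)
    · exact fun j _ => aux_transl_mp μ _
    · exact fun j _ => aux_transl_emb _
    · intro j _
      ext x
      simp only [Set.mem_preimage]
      constructor
      · intro hx
        have h1 := hBpres (-(j:ℚ_[p]))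
          (by rw [norm_neg]; exact_mod_cast Padic.norm_int_le_one (j:ℤ)) _ hx
        have h2 : x + (j:ℚ_[p]) • w + (-(j:ℚ_[p])) • w = x := by module
        rwa [h2] at h1
      · intro hx
        exact hBpres (j:ℚ_[p]) (by exact_mod_cast Padic.norm_int_le_one (j:ℤ)) x hx
    · intro x hx
      have h1 : ∀ j ∈ Finset.range p, f (x + (j:ℚ_[p]) • w) = ψ (t x + (j:ℚ_[p]) * 1) := by
        intro j _
        rw [hfdef]
        simp only
        rw [hshift x (j:ℚ_[p]), mul_one]
      rw [Finset.sum_congr rfl h1]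
      exact aux_sum_psi_zero ψ hψ_triv hψ_nontriv (t x) 1 norm_one
  -- preservation of C n by unit scalings
  have hCpres : ∀ u : ℚ_[p], ‖u‖ = 1 → ∀ n : ℕ, ∀ x, x ∈ C n →
      (u * x.1, u * x.2.1, u * x.2.2) ∈ C n := by
    rintro u hu n x ⟨⟨h1, h2, h3, h4⟩, h5⟩
    have h5' : ‖t x‖ = (p:ℝ)^(n+1) := h5
    refine ⟨⟨?_, ?_, ?_, ?_⟩, ?_⟩
    · show ‖u * x.1‖ ≤ (p:ℝ)^ℓ
      rw [norm_mul, hu, one_mul]; exact h1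
    · show ‖u * x.2.1‖ ≤ (p:ℝ)^ℓ
      rw [norm_mul, hu, one_mul]; exact h2
    · show ‖u * x.2.2‖ ≤ (p:ℝ)^ℓ
      rw [norm_mul, hu, one_mul]; exact h3
    · show ‖(u * x.1)^2 + (u * x.2.1) * (u * x.2.2)‖ ≤ (p:ℝ)^m
      have heq : (u * x.1)^2 + (u * x.2.1) * (u * x.2.2) = u^2 * (x.1^2 + x.2.1 * x.2.2) := by
        ring
      rw [heq, norm_mul, norm_pow, hu, one_pow, one_mul]
      exact h4
    · show ‖2*(u*x.1)*α + (u*x.2.1)*γ + (u*x.2.2)*β‖ = (p:ℝ)^(n+1)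
      have heq : 2*(u*x.1)*α + (u*x.2.1)*γ + (u*x.2.2)*β = u * t x := by
        rw [htdef]; ring
      rw [heq, norm_mul, hu, one_mul]
      exact h5'
  -- the integral over each C n vanishes
  have hC0 : ∀ n ∈ Finset.range (ℓ+K), ∫ x in C n, f x ∂ν = 0 := by
    intro n _
    have hun : ∀ j : ℕ, ‖(1 + (j:ℚ_[p]) * (p:ℚ_[p])^(n+1) : ℚ_[p])‖ = 1 := by
      intro j
      apply aux_norm_one_add
      rw [norm_mul, norm_pow, Padic.norm_p]
      calc ‖(j:ℚ_[p])‖ * ((p:ℝ)⁻¹)^(n+1) ≤ 1 * ((p:ℝ)⁻¹)^(n+1) := by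
            apply mul_le_mul _ le_rfl (by positivity) one_pos.le
            exact_mod_cast Padic.norm_int_le_one (j:ℤ)
        _ < 1 := by
            rw [one_mul]
            exact pow_lt_one₀ (by positivity) (inv_lt_one_of_one_lt₀ hp1) (by omega)
    have hun0 : ∀ j : ℕ, (1 + (j:ℚ_[p]) * (p:ℚ_[p])^(n+1) : ℚ_[p]) ≠ 0 := by
      intro j h
      have := hun j
      rw [h, norm_zero] at this
      linarith
    apply aux_kill ν (C n) (hCmeas n) f (hfS.mono_set Set.inter_subset_left) p hprime.pos
      (fun j x => ((1 + (j:ℚ_[p]) * (p:ℚ_[p])^(n+1)) * x.1,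
        (1 + (j:ℚ_[p]) * (p:ℚ_[p])^(n+1)) * x.2.1,
        (1 + (j:ℚ_[p]) * (p:ℚ_[p])^(n+1)) * x.2.2))
    · exact fun j _ => aux_scal_mp μ _ (hun j)
    · exact fun j _ => aux_scal_emb _ (hun0 j)
    · intro j _
      ext x
      simp only [Set.mem_preimage]
      constructor
      · intro hx
        have h1 := hCpres (1 + (j:ℚ_[p]) * (p:ℚ_[p])^(n+1))⁻¹
          (by rw [norm_inv, hun j]; norm_num) n _ hx
        have h2 : ((1 + (j:ℚ_[p]) * (p:ℚ_[p])^(n+1))⁻¹ *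
            ((1 + (j:ℚ_[p]) * (p:ℚ_[p])^(n+1)) * x.1)) = x.1 :=
          inv_mul_cancel_left₀ (hun0 j) _
        have h3 : ((1 + (j:ℚ_[p]) * (p:ℚ_[p])^(n+1))⁻¹ *
            ((1 + (j:ℚ_[p]) * (p:ℚ_[p])^(n+1)) * x.2.1)) = x.2.1 :=
          inv_mul_cancel_left₀ (hun0 j) _
        have h4 : ((1 + (j:ℚ_[p]) * (p:ℚ_[p])^(n+1))⁻¹ *
            ((1 + (j:ℚ_[p]) * (p:ℚ_[p])^(n+1)) * x.2.2)) = x.2.2 :=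
          inv_mul_cancel_left₀ (hun0 j) _
        rwa [h2, h3, h4] at h1
      · exact fun hx => hCpres _ (hun j) n x hx
    · rintro x hx
      obtain ⟨hxS, hxn⟩ := hx
      have hxn' : ‖t x‖ = (p:ℝ)^(n+1) := hxn
      have hz : ‖(p:ℚ_[p])^(n+1) * t x‖ = 1 := by
        rw [norm_mul, norm_pow, Padic.norm_p, hxn', ← mul_pow,
          inv_mul_cancel₀ (ne_of_gt hp0), one_pow]
      have h1 : ∀ j ∈ Finset.range p,
          f ((1 + (j:ℚ_[p]) * (p:ℚ_[p])^(n+1)) * x.1,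
            (1 + (j:ℚ_[p]) * (p:ℚ_[p])^(n+1)) * x.2.1,
            (1 + (j:ℚ_[p]) * (p:ℚ_[p])^(n+1)) * x.2.2)
          = ψ (t x + (j:ℚ_[p]) * ((p:ℚ_[p])^(n+1) * t x)) := by
        intro j _
        rw [hfdef]
        simp only
        congr 1
        rw [htdef]
        ring
      rw [Finset.sum_congr rfl h1]
      exact aux_sum_psi_zero ψ hψ_triv hψ_nontriv (t x) ((p:ℚ_[p])^(n+1) * t x) hz
  -- assembling
  have hgoal : ∫ x in S, ψ ((!![x.1, x.2.1; x.2.2, -x.1] * Y).trace) ∂ν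
      = ∫ x in S, f x ∂ν :=
    setIntegral_congr_fun hSmeas (fun x _ => by rw [htrace x])
  rw [hgoal, hcover]
  have hUmeas : MeasurableSet (⋃ n ∈ Finset.range (ℓ+K), C n) :=
    (Finset.range (ℓ+K)).measurableSet_biUnion (fun n _ => hCmeas n)
  have hUsub : (⋃ n ∈ Finset.range (ℓ+K), C n) ⊆ S :=
    Set.iUnion₂_subset fun n _ => Set.inter_subset_left
  have hdisj : Disjoint B (⋃ n ∈ Finset.range (ℓ+K), C n) := by
    rw [Set.disjoint_left]
    rintro x ⟨_, hxB⟩ hxU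
    obtain ⟨n, _, _, hxn⟩ := Set.mem_iUnion₂.1 hxU
    have hxB' : ‖t x‖ ≤ 1 := hxB
    have hxn' : ‖t x‖ = (p:ℝ)^(n+1) := hxn
    have : (1:ℝ) < (p:ℝ)^(n+1) := one_lt_pow₀ hp1 (by omega)
    rw [hxn'] at hxB'
    linarith
  have hBS : B ⊆ S := Set.inter_subset_left
  rw [setIntegral_union hdisj hUmeas (hfS.mono_set hBS) (hfS.mono_set hUsub)]
  rw [integral_biUnion_finset (Finset.range (ℓ+K)) (fun n _ => hCmeas n) ?pdisj
    (fun n _ => hfS.mono_set Set.inter_subset_left)]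
  case pdisj =>
    intro i _ j _ hij
    have hvals : ((p:ℝ)^(i+1) : ℝ) ≠ (p:ℝ)^(j+1) := by
      rcases Nat.lt_or_ge i j with hlt | hge
      · exact ne_of_lt (pow_lt_pow_right₀ hp1 (by omega))
      · have hlt : j < i := by omega
        exact (ne_of_lt (pow_lt_pow_right₀ hp1 (by omega))).symm
    rw [Function.onFun, Set.disjoint_left]
    rintro x ⟨_, hxi⟩ ⟨_, hxj⟩
    have hxi' : ‖t x‖ = (p:ℝ)^(i+1) := hxi
    have hxj' : ‖t x‖ = (p:ℝ)^(j+1) := hxj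
    exact hvals (hxi' ▸ hxj')
  rw [hB0, Finset.sum_congr rfl hC0, Finset.sum_const, smul_zero, zero_add]
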